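/- Under the two-element tensor-product SBP–SAT setting, assume the projection matrices satisfy the degree-0 conditions R_L^{1D} 1 = 1_Γ, R_R^{1D} 1 = 1_Γ, (R_L^{1D})ᵀ M_Γ 1_Γ = H_{η,L} 1, and (R_R^{1D})ᵀ M_Γ 1_Γ = H_{η,R} 1, where 1_Γ ∈ ℝ^{N_Γ} is the all-ones vector. Then for all solution vectors u_L, u_R the total numerical flux through the shared interface is single-valued: 1ᵀ f*_L = 1ᵀ f*_R, and both sides equal (λ/2)( 1ᵀ E_{ξN,L} u_L + 1ᵀ E_{ξ1,R} u_R ) − (σ|λ|/2)( 1ᵀ E_{ξ1,R} u_R − 1ᵀ E_{ξN,L} u_L ). -/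

import Mathlib

open Matrix
open scoped Kronecker

noncomputable section

/-- Boundary matrix `e_i e_iᵀ` built from the `i`-th standard basis vector. -/
def bmat {n : ℕ} (i : Fin n) : Matrix (Fin n) (Fin n) ℝ :=
  vecMulVec (Pi.single i 1) (Pi.single i 1)

/-- Two-dimensional projection `e_iᵀ ⊗ R1` onto the intermediate interface grid:
it restricts the solution to the face `ξ`-index `i` and applies the
one-dimensional projection `R1`. -/
def proj2D {nx ny NΓ : ℕ} (i : Fin nx) (R1 : Matrix (Fin NΓ) (Fin ny) ℝ) :
    Matrix (Fin NΓ) (Fin nx × Fin ny) ℝ :=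
  Matrix.of fun g q => (if q.1 = i then 1 else 0) * R1 g q.2

lemma proj2D_mulVec_one {nx ny NΓ : ℕ} (i : Fin nx) (R1 : Matrix (Fin NΓ) (Fin ny) ℝ) :
    proj2D i R1 *ᵥ (fun _ => (1:ℝ)) = R1 *ᵥ (fun _ => (1:ℝ)) := by
  funext g
  simp [proj2D, mulVec, dotProduct, Fintype.sum_prod_type, ite_mul, Finset.sum_ite_eq']

lemma lemA {nx ny NΓ : ℕ} (i : Fin nx) (R1 : Matrix (Fin NΓ) (Fin ny) ℝ)
    (h1 : R1 *ᵥ (fun _ => (1:ℝ)) = fun _ => (1:ℝ))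
    (x : Fin NΓ → ℝ) :
    (fun _ => (1:ℝ)) ⬝ᵥ ((proj2D i R1)ᵀ *ᵥ x) = (fun _ => (1:ℝ)) ⬝ᵥ x := by
  rw [dotProduct_mulVec, vecMul_transpose, proj2D_mulVec_one, h1]

lemma proj2D_transpose_mulVec {nx ny NΓ : ℕ} (i : Fin nx)
    (R1 : Matrix (Fin NΓ) (Fin ny) ℝ) (w : Fin NΓ → ℝ) :
    (proj2D i R1)ᵀ *ᵥ w
      = fun pq => (if pq.1 = i then 1 else 0) * (R1ᵀ *ᵥ w) pq.2 := by
  funext pq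
  simp only [proj2D, mulVec, dotProduct, transpose_apply, of_apply, Finset.mul_sum]
  exact Finset.sum_congr rfl fun g _ => by ring

lemma diag_mulVec_one {ny : ℕ} (Hy : Matrix (Fin ny) (Fin ny) ℝ) (hd : Hy.IsDiag)
    (q : Fin ny) : (Hy *ᵥ fun _ => (1:ℝ)) q = Hy q q := by
  simp only [mulVec, dotProduct, mul_one]
  rw [Finset.sum_eq_single q]
  · intro b _ hb; exact hd (Ne.symm hb)
  · simp

lemma kron_transpose_one {nx ny : ℕ} (i : Fin nx)
    (Hy : Matrix (Fin ny) (Fin ny) ℝ) (hd : Hy.IsDiag) :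
    (bmat i ⊗ₖ Hy)ᵀ *ᵥ (fun _ => (1:ℝ))
      = fun pq => (if pq.1 = i then 1 else 0) * Hy pq.2 pq.2 := by
  funext pq
  obtain ⟨p, q⟩ := pq
  simp only [mulVec, dotProduct, transpose_apply, kroneckerMap_apply, bmat, vecMulVec_apply,
    Pi.single_apply, Fintype.sum_prod_type, mul_one, ite_mul, one_mul, zero_mul, mul_ite, mul_zero]
  by_cases hp : p = i
  · simp only [hp, if_true, one_mul]
    rw [Finset.sum_comm]
    simp only [Finset.sum_ite_eq', Finset.mem_univ, if_true]
    rw [Finset.sum_eq_single q]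
    · intro b _ hb; exact hd hb
    · simp
  · simp [hp]

lemma lemB {nx ny NΓ : ℕ} (i : Fin nx)
    (Hy : Matrix (Fin ny) (Fin ny) ℝ) (hd : Hy.IsDiag)
    (MΓ : Matrix (Fin NΓ) (Fin NΓ) ℝ)
    (R1 : Matrix (Fin NΓ) (Fin ny) ℝ)
    (h2 : R1ᵀ *ᵥ (MΓ *ᵥ fun _ => (1:ℝ)) = Hy *ᵥ fun _ => (1:ℝ))
    (u : Fin nx × Fin ny → ℝ) :
    (MΓ *ᵥ fun _ => (1:ℝ)) ⬝ᵥ (proj2D i R1 *ᵥ u)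
      = (fun _ => (1:ℝ)) ⬝ᵥ ((bmat i ⊗ₖ Hy) *ᵥ u) := by
  rw [dotProduct_mulVec _ (proj2D i R1), ← mulVec_transpose,
      proj2D_transpose_mulVec, h2,
      dotProduct_mulVec _ (bmat i ⊗ₖ Hy), ← mulVec_transpose,
      kron_transpose_one i Hy hd]
  congr 1
  funext pq
  rw [diag_mulVec_one Hy hd]


/-- **The total numerical flux through the interface is single-valued.**
In the two-element tensor-product SBP–SAT setting, if the projection matrices
satisfy the degree-0 conditions, then `1ᵀ f*_L = 1ᵀ f*_R`, both being equal to
`(λ/2)(1ᵀ E_{ξN,L} u_L + 1ᵀ E_{ξ1,R} u_R) − (σ|λ|/2)(1ᵀ E_{ξ1,R} u_R − 1ᵀ E_{ξN,L} u_L)`. -/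
theorem nonconforming_flux_single_valued
    {nxL nyL nxR nyR NΓ : ℕ}
    -- norm matrices (diagonal with positive entries)
    (HyL : Matrix (Fin (nyL + 1)) (Fin (nyL + 1)) ℝ)
    (HyR : Matrix (Fin (nyR + 1)) (Fin (nyR + 1)) ℝ)
    (hHyLd : HyL.IsDiag) (hHyLp : ∀ i, 0 < HyL i i)
    (hHyRd : HyR.IsDiag) (hHyRp : ∀ i, 0 < HyR i i)
    -- intermediate interface grid with symmetric norm matrix
    (MΓ : Matrix (Fin NΓ) (Fin NΓ) ℝ) (hMΓ : MΓᵀ = MΓ)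
    (RL1 : Matrix (Fin NΓ) (Fin (nyL + 1)) ℝ)
    (RR1 : Matrix (Fin NΓ) (Fin (nyR + 1)) ℝ)
    -- degree-0 conditions on the projections
    (hRL10 : RL1 *ᵥ (fun _ => (1:ℝ)) = fun _ => (1:ℝ))
    (hRR10 : RR1 *ᵥ (fun _ => (1:ℝ)) = fun _ => (1:ℝ))
    (hRL10d : RL1ᵀ *ᵥ (MΓ *ᵥ fun _ => (1:ℝ)) = HyL *ᵥ fun _ => (1:ℝ))
    (hRR10d : RR1ᵀ *ᵥ (MΓ *ᵥ fun _ => (1:ℝ)) = HyR *ᵥ fun _ => (1:ℝ))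
    -- two-dimensional surface operators and projections
    (ExNL : Matrix (Fin (nxL + 1) × Fin (nyL + 1)) (Fin (nxL + 1) × Fin (nyL + 1)) ℝ)
    (hExNL : ExNL = bmat (Fin.last nxL) ⊗ₖ HyL)
    (Ex1R : Matrix (Fin (nxR + 1) × Fin (nyR + 1)) (Fin (nxR + 1) × Fin (nyR + 1)) ℝ)
    (hEx1R : Ex1R = bmat 0 ⊗ₖ HyR)
    (RL : Matrix (Fin NΓ) (Fin (nxL + 1) × Fin (nyL + 1)) ℝ)
    (hRL : RL = proj2D (Fin.last nxL) RL1)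
    (RR : Matrix (Fin NΓ) (Fin (nxR + 1) × Fin (nyR + 1)) ℝ)
    (hRR : RR = proj2D 0 RR1)
    -- wave speed, SAT parameter, solution vectors, numerical fluxes
    (lam σ : ℝ)
    (uL : Fin (nxL + 1) × Fin (nyL + 1) → ℝ)
    (uR : Fin (nxR + 1) × Fin (nyR + 1) → ℝ)
    (fL : Fin (nxL + 1) × Fin (nyL + 1) → ℝ)
    (hfL : fL =
      (lam / 2) • (ExNL *ᵥ uL + RLᵀ *ᵥ (MΓ *ᵥ (RR *ᵥ uR)))
        - (σ * |lam| / 2) • (RLᵀ *ᵥ (MΓ *ᵥ (RR *ᵥ uR)) - RLᵀ *ᵥ (MΓ *ᵥ (RL *ᵥ uL))))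
    (fR : Fin (nxR + 1) × Fin (nyR + 1) → ℝ)
    (hfR : fR =
      (lam / 2) • (Ex1R *ᵥ uR + RRᵀ *ᵥ (MΓ *ᵥ (RL *ᵥ uL)))
        - (σ * |lam| / 2) • (RRᵀ *ᵥ (MΓ *ᵥ (RR *ᵥ uR)) - RRᵀ *ᵥ (MΓ *ᵥ (RL *ᵥ uL)))) :
    (fun _ => (1:ℝ)) ⬝ᵥ fL = (fun _ => (1:ℝ)) ⬝ᵥ fR ∧
    (fun _ => (1:ℝ)) ⬝ᵥ fL =
      (lam / 2) * ((fun _ => (1:ℝ)) ⬝ᵥ (ExNL *ᵥ uL)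
          + (fun _ => (1:ℝ)) ⬝ᵥ (Ex1R *ᵥ uR))
        - (σ * |lam| / 2) * ((fun _ => (1:ℝ)) ⬝ᵥ (Ex1R *ᵥ uR)
          - (fun _ => (1:ℝ)) ⬝ᵥ (ExNL *ᵥ uL)) := by
  subst hExNL hEx1R hRL hRR hfL hfR
  set a := (fun _ => (1:ℝ)) ⬝ᵥ ((bmat (Fin.last nxL) ⊗ₖ HyL) *ᵥ uL) with ha
  set b := (fun _ => (1:ℝ)) ⬝ᵥ ((bmat 0 ⊗ₖ HyR) *ᵥ uR) with hb
  have key : ∀ {nx ny : ℕ} (i : Fin (nx+1)) (R1 : Matrix (Fin NΓ) (Fin (ny+1)) ℝ)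
      (h1 : R1 *ᵥ (fun _ => (1:ℝ)) = fun _ => (1:ℝ))
      {nx' ny' : ℕ} (j : Fin (nx'+1)) (Hy : Matrix (Fin (ny'+1)) (Fin (ny'+1)) ℝ)
      (hd : Hy.IsDiag) (R2 : Matrix (Fin NΓ) (Fin (ny'+1)) ℝ)
      (h2 : R2ᵀ *ᵥ (MΓ *ᵥ fun _ => (1:ℝ)) = Hy *ᵥ fun _ => (1:ℝ))
      (u : Fin (nx'+1) × Fin (ny'+1) → ℝ),
      (fun _ => (1:ℝ)) ⬝ᵥ ((proj2D i R1)ᵀ *ᵥ (MΓ *ᵥ (proj2D j R2 *ᵥ u)))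
        = (fun _ => (1:ℝ)) ⬝ᵥ ((bmat j ⊗ₖ Hy) *ᵥ u) := by
    intro nx ny i R1 h1 nx' ny' j Hy hd R2 h2 u
    rw [lemA i R1 h1, dotProduct_mulVec, ← mulVec_transpose, hMΓ,
      lemB j Hy hd MΓ R2 h2 u]
  have cLR := key (Fin.last nxL) RL1 hRL10 0 HyR hHyRd RR1 hRR10d uR
  have cLL := key (Fin.last nxL) RL1 hRL10 (Fin.last nxL) HyL hHyLd RL1 hRL10d uL
  have cRL := key (0 : Fin (nxR+1)) RR1 hRR10 (Fin.last nxL) HyL hHyLd RL1 hRL10d uL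
  have cRR := key (0 : Fin (nxR+1)) RR1 hRR10 0 HyR hHyRd RR1 hRR10d uR
  simp only [dotProduct_sub, dotProduct_add, dotProduct_smul, smul_eq_mul,
    cLR, cLL, cRL, cRR, ← ha, ← hb]
  exact ⟨by ring, trivial⟩
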